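/- The Lagrange spectrum over Q((1/T)), defined as the set of Lagrange constants l(α) for all irrational α ∈ Q((1/T)), equals the set of all positive integers: for every positive integer k there exists α with l(α) = k, and every Lagrange constant is a positive integer. -/

import Mathlib

noncomputable section
open scoped Classical

/-- `ℚ((1/T))`: formal Laurent series in `X = 1/T` over `ℚ`. The exponent `n` of `X`
corresponds to `T^(-n)`. -/
abbrev QLaurent := LaurentSeries ℚ

/-- The embedding of `ℚ[T]` into `ℚ((1/T))`, sending `T` to `X⁻¹ = single (-1) 1`. -/
noncomputable def polyToL : Polynomial ℚ →ₐ[ℚ] QLaurent :=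
  Polynomial.aeval (HahnSeries.single (-1 : ℤ) (1 : ℚ))

/-- The embedding of the rational functions `ℚ(T)` into `ℚ((1/T))`. -/
noncomputable def ratToL (r : RatFunc ℚ) : QLaurent := polyToL r.num / polyToL r.denom

/-- The degree (in `T`) of a formal Laurent series in `1/T`, with `deg 0 = ⊥`. -/
noncomputable def degL (α : QLaurent) : WithBot ℤ :=
  if α = 0 then ⊥ else ((-α.order : ℤ) : WithBot ℤ)

/-- Integer-valued degree in `T` (junk value `0` at `α = 0`). -/
noncomputable def degZ (α : QLaurent) : ℤ := -α.order

/-- The polynomial part `⌊α⌋` of `α ∈ ℚ((1/T))`: truncation to the terms of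
nonnegative degree in `T` (nonpositive exponent of `X = 1/T`). -/
noncomputable def polyPart (α : QLaurent) : QLaurent where
  coeff n := if n ≤ 0 then α.coeff n else 0
  isPWO_support' := α.isPWO_support'.mono (by
    intro n hn
    simp only [Function.mem_support, ne_eq] at hn ⊢
    intro h
    apply hn
    split_ifs <;> simp [h])

/-- The fractional part `{α} = α - ⌊α⌋`. -/
noncomputable def fracPart (α : QLaurent) : QLaurent := α - polyPart α

/-- The complete quotients `α_n` of the continued fraction algorithm:
`α_0 = α`, `α_{n+1} = 1/{α_n}`. -/
noncomputable def cfA (α : QLaurent) : ℕ → QLaurent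
  | 0 => α
  | n + 1 => (fracPart (cfA α n))⁻¹

/-- The partial quotients `a_n = ⌊α_n⌋` of the continued fraction of `α`. -/
noncomputable def pq (α : QLaurent) (n : ℕ) : QLaurent := polyPart (cfA α n)

lemma polyToL_coeff (p : Polynomial ℚ) (m : ℤ) :
    (polyToL p).coeff m = if m ≤ 0 then p.coeff (-m).toNat else 0 := by
  induction p using Polynomial.induction_on' with
  | add p q hp hq =>
      simp [map_add, HahnSeries.coeff_add, hp, hq]
      split <;> simp
  | monomial n a =>
      have : polyToL (Polynomial.monomial n a) = HahnSeries.single (-(n:ℤ)) a := by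
        have hC : (algebraMap ℚ QLaurent) = (HahnSeries.C : ℚ →+* HahnSeries ℤ ℚ) :=
          Subsingleton.elim _ _
        rw [polyToL, Polynomial.aeval_monomial, HahnSeries.single_pow, hC, HahnSeries.C_apply,
          HahnSeries.single_mul_single]
        norm_num
      rw [this, HahnSeries.coeff_single, Polynomial.coeff_monomial]
      split_ifs with h1 h2 h3 <;> try rfl
      · omega
      · omega
      · omega

lemma polyToL_injective : Function.Injective polyToL := by
  intro p q h
  ext n
  have := congrArg (fun x => HahnSeries.coeff x (-(n:ℤ))) h
  simpa [polyToL_coeff] using this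

lemma polyToL_ne_zero {p : Polynomial ℚ} (hp : p ≠ 0) : polyToL p ≠ 0 := by
  intro h
  exact hp (polyToL_injective (by simpa using h))

noncomputable def ratLift : RatFunc ℚ →+* QLaurent :=
  RatFunc.liftRingHom polyToL.toRingHom (by
    intro p hp
    simp only [Submonoid.mem_comap, AlgHom.toRingHom_eq_coe, RingHom.coe_coe]
    exact mem_nonZeroDivisors_of_ne_zero
      (polyToL_ne_zero (mem_nonZeroDivisors_iff_ne_zero.mp hp)))

lemma ratToL_eq (r : RatFunc ℚ) : ratToL r = ratLift r := by
  rw [ratLift, RatFunc.liftRingHom_apply]; rfl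

lemma range_ratToL : Set.range ratToL = (ratLift.fieldRange : Set QLaurent) := by
  ext x
  simp only [Set.mem_range, SetLike.mem_coe, RingHom.mem_fieldRange]
  exact ⟨fun ⟨r, h⟩ => ⟨r, by rw [← ratToL_eq]; exact h⟩,
    fun ⟨r, h⟩ => ⟨r, by rw [ratToL_eq]; exact h⟩⟩

lemma polyPart_coeff (α : QLaurent) (n : ℤ) :
    (polyPart α).coeff n = if n ≤ 0 then α.coeff n else 0 := rfl

lemma fracPart_coeff (α : QLaurent) (n : ℤ) :
    (fracPart α).coeff n = if n ≤ 0 then 0 else α.coeff n := by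
  rw [fracPart, HahnSeries.coeff_sub, polyPart_coeff]
  split <;> simp

lemma polyPart_mem_range (β : QLaurent) : polyPart β ∈ ratLift.fieldRange := by
  by_cases hβ : β = 0
  · have : polyPart β = 0 := by
      ext n; rw [polyPart_coeff, hβ]; simp
    rw [this]; exact zero_mem _
  · set N : ℕ := (1 - β.order).toNat with hN
    have hNo : -(N:ℤ) < β.order := by
      have := Int.self_le_toNat (1 - β.order)
      omega
    set p : Polynomial ℚ := ∑ i ∈ Finset.range N, Polynomial.monomial i (β.coeff (-(i:ℤ))) with hp
    have hpc : ∀ j : ℕ, p.coeff j = if j < N then β.coeff (-(j:ℤ)) else 0 := by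
      intro j
      rw [hp, Polynomial.finset_sum_coeff]
      simp only [Polynomial.coeff_monomial]
      rw [Finset.sum_ite_eq' (Finset.range N) j]
      simp [Finset.mem_range]
    have key : polyToL p = polyPart β := by
      ext m
      rw [polyToL_coeff, polyPart_coeff]
      split
      · next hm =>
        rw [hpc]
        have h1 : (-(((-m).toNat : ℕ)) : ℤ) = m := by omega
        split
        · rw [h1]
        · next h2 =>
          have : m < β.order := by omega
          exact (HahnSeries.coeff_eq_zero_of_lt_order this).symm
      · rfl
    refine ⟨algebraMap (Polynomial ℚ) (RatFunc ℚ) p, ?_⟩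
    rw [← ratToL_eq, ratToL, RatFunc.num_algebraMap, RatFunc.denom_algebraMap, map_one, div_one,
      key]

lemma fracPart_ne_zero {β : QLaurent} (hβ : β ∉ ratLift.fieldRange) : fracPart β ≠ 0 := by
  intro h
  apply hβ
  have : β = polyPart β := by rwa [fracPart, sub_eq_zero] at h
  rw [this]
  exact polyPart_mem_range β

lemma fracPart_notMem {β : QLaurent} (hβ : β ∉ ratLift.fieldRange) :
    fracPart β ∉ ratLift.fieldRange := by
  intro h
  apply hβ
  have : β = fracPart β + polyPart β := by rw [fracPart]; ring
  rw [this]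
  exact add_mem h (polyPart_mem_range β)

lemma cfA_notMem {α : QLaurent} (hα : α ∉ ratLift.fieldRange) (n : ℕ) :
    cfA α n ∉ ratLift.fieldRange := by
  induction n with
  | zero => exact hα
  | succ n ih =>
      rw [cfA]
      intro h
      have h2 : fracPart (cfA α n) ∈ ratLift.fieldRange := by
        have hne : fracPart (cfA α n) ≠ 0 := fracPart_ne_zero ih
        have := ratLift.fieldRange.inv_mem h
        rwa [inv_inv] at this
      exact fracPart_notMem ih h2

lemma fracPart_order_pos {β : QLaurent} (hβ : fracPart β ≠ 0) : 1 ≤ (fracPart β).order := by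
  by_contra h
  push_neg at h
  have h0 : (fracPart β).order ≤ 0 := by omega
  have := HahnSeries.coeff_order_eq_zero.not.mpr hβ
  rw [fracPart_coeff, if_pos h0] at this
  exact this rfl

lemma degZ_pq_ge {β : QLaurent} (hβ : β ∉ ratLift.fieldRange) :
    1 ≤ degZ (polyPart (fracPart β)⁻¹) := by
  set δ := fracPart β with hδ
  have hδ0 : δ ≠ 0 := fracPart_ne_zero hβ
  have hδo : 1 ≤ δ.order := fracPart_order_pos hδ0
  have hγ0 : δ⁻¹ ≠ 0 := inv_ne_zero hδ0
  have hmul : δ⁻¹ * δ = 1 := inv_mul_cancel₀ hδ0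
  have horder : δ⁻¹.order + δ.order = 0 := by
    have := HahnSeries.order_mul hγ0 hδ0
    rw [hmul] at this
    rw [← this, HahnSeries.order_one]
  have hγo : δ⁻¹.order ≤ -1 := by omega
  have hco : (polyPart δ⁻¹).coeff δ⁻¹.order ≠ 0 := by
    rw [polyPart_coeff, if_pos (by omega)]
    exact HahnSeries.coeff_order_eq_zero.not.mpr hγ0
  have hP0 : polyPart δ⁻¹ ≠ 0 := fun h => hco (by rw [h]; rfl)
  have := HahnSeries.order_le_of_coeff_ne_zero hco
  rw [degZ]
  omega

noncomputable def cSeq (k : ℕ) : ℕ → ℚ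
  | n =>
    (if n = 0 then 1 else 0) -
      (if h : 2 * k ≤ n ∧ 1 ≤ k then
        ∑ p ∈ (Finset.HasAntidiagonal.antidiagonal (n - 2 * k)).attach,
          cSeq k p.1.1 * cSeq k p.1.2
      else 0)
  decreasing_by
  · have h1 := Finset.HasAntidiagonal.antidiagonal.fst_le p.2
    omega
  · have h1 := Finset.HasAntidiagonal.antidiagonal.snd_le p.2
    omega

lemma cSeq_zero (k : ℕ) (hk : 1 ≤ k) : cSeq k 0 = 1 := by
  rw [cSeq]
  rw [if_pos rfl, dif_neg (by omega)]
  ring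

noncomputable def fSeries (k : ℕ) : PowerSeries ℚ := PowerSeries.mk (cSeq k)

lemma fSeries_eq (k : ℕ) (hk : 1 ≤ k) :
    fSeries k = 1 - (PowerSeries.X : PowerSeries ℚ) ^ (2 * k) * (fSeries k) ^ 2 := by
  ext n
  rw [map_sub, PowerSeries.coeff_X_pow_mul']
  rw [fSeries, PowerSeries.coeff_mk]
  rw [cSeq]
  congr 1
  · simp [PowerSeries.coeff_one]
  · by_cases h : 2 * k ≤ n
    · rw [dif_pos ⟨h, hk⟩, if_pos h, sq, PowerSeries.coeff_mul,
        ← Finset.sum_attach (Finset.HasAntidiagonal.antidiagonal (n - 2 * k))]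
      simp [fSeries, PowerSeries.coeff_mk]
    · rw [dif_neg (by tauto), if_neg h]

noncomputable def tS (k : ℕ) : QLaurent := HahnSeries.single (-(k:ℤ)) (1:ℚ)

noncomputable def epsS (k : ℕ) : QLaurent :=
  HahnSeries.ofPowerSeries ℤ ℚ (PowerSeries.X ^ k * fSeries k)

noncomputable def alphaS (k : ℕ) : QLaurent := tS k + epsS k

lemma epsS_coeff_nonpos (k : ℕ) (hk : 1 ≤ k) {n : ℤ} (hn : n ≤ 0) : (epsS k).coeff n = 0 := by
  rcases lt_or_eq_of_le hn with hn' | hn'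
  · rw [epsS, HahnSeries.ofPowerSeries_apply]
    apply HahnSeries.embDomain_notin_range
    rintro ⟨m, hm⟩
    have hm' : (m : ℤ) = n := hm
    omega
  · subst hn'
    have : ((0:ℕ):ℤ) = (0:ℤ) := rfl
    rw [epsS, ← this, HahnSeries.ofPowerSeries_apply_coeff, PowerSeries.coeff_X_pow_mul']
    rw [if_neg (by omega)]

lemma epsS_mul_alphaS (k : ℕ) (hk : 1 ≤ k) : epsS k * alphaS k = 1 := by
  set F : QLaurent := HahnSeries.ofPowerSeries ℤ ℚ (fSeries k) with hF
  have heps : epsS k = HahnSeries.single (k:ℤ) 1 * F := by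
    rw [epsS, map_mul, hF, HahnSeries.ofPowerSeries_X_pow]
  have h1 : HahnSeries.single (k:ℤ) (1:ℚ) * HahnSeries.single (-(k:ℤ)) 1 = 1 := by
    rw [HahnSeries.single_mul_single]
    norm_num
  have h2 : HahnSeries.single (k:ℤ) (1:ℚ) * HahnSeries.single (k:ℤ) 1
      = HahnSeries.single ((2*k : ℕ):ℤ) 1 := by
    rw [HahnSeries.single_mul_single, one_mul]
    congr 1
    push_cast
    ring
  have hid : F + HahnSeries.single ((2*k : ℕ):ℤ) 1 * F ^ 2 = 1 := by
    have hf : fSeries k + PowerSeries.X ^ (2*k) * fSeries k ^ 2 = 1 := by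
      have := fSeries_eq k hk
      linear_combination this
    have h3 := congrArg (HahnSeries.ofPowerSeries ℤ ℚ) hf
    simp only [map_add, map_mul, map_pow, map_one, HahnSeries.ofPowerSeries_X,
      HahnSeries.single_pow, nsmul_eq_mul, mul_one, one_pow] at h3
    rw [← h3, hF]
  calc epsS k * alphaS k
      = F + HahnSeries.single ((2*k : ℕ):ℤ) 1 * F ^ 2 := by
        rw [alphaS, heps, tS]
        linear_combination F * h1 + F^2 * h2
    _ = 1 := hid

lemma polyPart_alphaS (k : ℕ) (hk : 1 ≤ k) : polyPart (alphaS k) = tS k := by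
  ext n
  rw [polyPart_coeff, alphaS, HahnSeries.coeff_add]
  split
  · next h => rw [epsS_coeff_nonpos k hk h, add_zero]
  · next h =>
    rw [tS, HahnSeries.coeff_single_of_ne (by omega)]

lemma epsS_ne_zero (k : ℕ) (hk : 1 ≤ k) : epsS k ≠ 0 := by
  intro h
  have := epsS_mul_alphaS k hk
  rw [h, zero_mul] at this
  exact zero_ne_one this

lemma fracPart_alphaS (k : ℕ) (hk : 1 ≤ k) : fracPart (alphaS k) = epsS k := by
  rw [fracPart, polyPart_alphaS k hk, alphaS]
  ring

lemma cfA_alphaS (k : ℕ) (hk : 1 ≤ k) (n : ℕ) : cfA (alphaS k) n = alphaS k := by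
  induction n with
  | zero => rfl
  | succ n ih =>
      rw [cfA, ih, fracPart_alphaS k hk]
      exact inv_eq_of_mul_eq_one_right (epsS_mul_alphaS k hk)

lemma degZ_tS (k : ℕ) : degZ (tS k) = k := by
  rw [degZ, tS, HahnSeries.order_single one_ne_zero]
  ring

lemma alphaS_sq (k : ℕ) (hk : 1 ≤ k) :
    alphaS k ^ 2 = tS k * alphaS k + 1 := by
  have h := epsS_mul_alphaS k hk
  have : alphaS k ^ 2 = (tS k + epsS k) * alphaS k := by rw [← alphaS, sq]
  rw [this, add_mul, h]

lemma alphaS_notMem (k : ℕ) (hk : 1 ≤ k) : alphaS k ∉ ratLift.fieldRange := by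
  rintro ⟨r, hr⟩
  have hr' : ratToL r = alphaS k := by rw [ratToL_eq]; exact hr
  set P := r.num with hP
  set Q := r.denom with hQ
  have hQ0 : Q ≠ 0 := r.denom_ne_zero
  have hQL : polyToL Q ≠ 0 := polyToL_ne_zero hQ0
  have hPL : alphaS k * polyToL Q = polyToL P := by
    rw [← hr', ratToL, div_mul_cancel₀ _ hQL]
  have htS : tS k = polyToL Polynomial.X ^ k := by
    rw [show polyToL Polynomial.X = HahnSeries.single (-1:ℤ) (1:ℚ) from
      Polynomial.aeval_X _, HahnSeries.single_pow, tS]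
    norm_num
  have key : polyToL (P ^ 2) = polyToL (Polynomial.X ^ k * P * Q + Q ^ 2) := by
    have h2 : alphaS k ^ 2 * polyToL Q ^ 2 = tS k * alphaS k * polyToL Q ^ 2
        + polyToL Q ^ 2 := by
      rw [alphaS_sq k hk]; ring
    rw [map_pow, map_add, map_mul, map_mul, map_pow, map_pow]
    calc polyToL P ^ 2 = (alphaS k * polyToL Q) ^ 2 := by rw [hPL]
      _ = alphaS k ^ 2 * polyToL Q ^ 2 := by ring
      _ = tS k * alphaS k * polyToL Q ^ 2 + polyToL Q ^ 2 := h2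
      _ = tS k * (alphaS k * polyToL Q) * polyToL Q + polyToL Q ^ 2 := by ring
      _ = polyToL Polynomial.X ^ k * polyToL P * polyToL Q + polyToL Q ^ 2 := by
          rw [hPL, htS]
  have keyP : P ^ 2 = Polynomial.X ^ k * P * Q + Q ^ 2 := polyToL_injective key
  have hcop : IsCoprime P Q := r.isCoprime_num_denom
  have hQunit : IsUnit Q := by
    refine (hcop.pow_left : IsCoprime (P ^ 2) Q).isUnit_of_dvd'
      ⟨Polynomial.X ^ k * P + Q, by rw [keyP]; ring⟩ dvd_rfl
  have hPunit : IsUnit P := by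
    refine (hcop.pow_right : IsCoprime P (Q ^ 2)).isUnit_of_dvd' dvd_rfl
      ⟨P - Polynomial.X ^ k * Q, by
        rw [show P * (P - Polynomial.X ^ k * Q) = P ^ 2 - Polynomial.X ^ k * P * Q by ring,
          keyP]; ring⟩
  obtain ⟨c, hc, hcP⟩ := Polynomial.isUnit_iff.mp hPunit
  obtain ⟨d, hd, hdQ⟩ := Polynomial.isUnit_iff.mp hQunit
  have e1 : (P ^ 2).coeff k = 0 := by
    rw [← hcP, ← map_pow, Polynomial.coeff_C, if_neg (by omega)]
  have e2 : (Polynomial.X ^ k * P * Q + Q ^ 2).coeff k = c * d := by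
    rw [← hcP, ← hdQ, Polynomial.coeff_add, ← map_pow, Polynomial.coeff_C, if_neg (by omega),
      show Polynomial.X ^ k * Polynomial.C c * Polynomial.C d
        = Polynomial.C (c * d) * Polynomial.X ^ k by rw [map_mul]; ring,
      Polynomial.coeff_C_mul, Polynomial.coeff_X_pow, if_pos rfl]
    ring
  rw [keyP, e2] at e1
  rcases mul_eq_zero.mp e1 with h | h
  · exact hc.ne_zero h
  · exact hd.ne_zero h

/-- The Lagrange spectrum over `ℚ((1/T))` — the set of Lagrange constants
`l(α) = limsup_h deg a_h` over all irrational `α ∈ ℚ((1/T))` (with the limsup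
finite, i.e. the degrees bounded) — is exactly the set of positive integers. -/
theorem lagrange_spectrum_eq_positive_integers :
    {k : ℤ | ∃ α : QLaurent, α ∉ Set.range ratToL ∧
        BddAbove (Set.range fun h : ℕ => degZ (pq α h)) ∧
        (Filter.atTop.limsup fun h : ℕ => degZ (pq α h)) = k}
      = {k : ℤ | 1 ≤ k} := by
  ext k
  simp only [Set.mem_setOf_eq]
  constructor
  · rintro ⟨α, hα, hbdd, hlim⟩
    rw [range_ratToL] at hα
    have hα' : α ∉ ratLift.fieldRange := fun h => hα (SetLike.mem_coe.mpr h)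
    have hirr : ∀ n, cfA α n ∉ ratLift.fieldRange := cfA_notMem hα'
    have hge : ∀ h : ℕ, 1 ≤ degZ (pq α (h+1)) := by
      intro h
      have : pq α (h+1) = polyPart (fracPart (cfA α h))⁻¹ := by rw [pq, cfA]
      rw [this]
      exact degZ_pq_ge (hirr h)
    rw [← hlim]
    apply Filter.le_limsup_of_frequently_le
    · apply Filter.Eventually.frequently
      rw [Filter.eventually_atTop]
      refine ⟨1, fun h hh => ?_⟩
      obtain ⟨m, rfl⟩ : ∃ m, h = m + 1 := ⟨h - 1, by omega⟩
      exact hge m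
    · obtain ⟨b, hb⟩ := hbdd
      exact Filter.isBoundedUnder_of ⟨b, fun x => hb (Set.mem_range_self x)⟩
  · intro hk
    set K := k.toNat with hKdef
    have hK : 1 ≤ K := by omega
    have hKk : (K:ℤ) = k := by omega
    have hconst : (fun h : ℕ => degZ (pq (alphaS K) h)) = fun _ : ℕ => k := by
      funext h
      rw [pq, cfA_alphaS K hK, polyPart_alphaS K hK, degZ_tS, hKk]
    refine ⟨alphaS K, ?_, ?_, ?_⟩
    · rw [range_ratToL]
      exact fun h => alphaS_notMem K hK (SetLike.mem_coe.mp h)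
    · rw [hconst]
      simpa [Set.range_const] using bddAbove_singleton
    · rw [hconst]
      exact Filter.limsup_const k

end
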